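/- In the conditionally independent binary-state setting with L2 loss and at least one omniscient adversary (k ≥ 1), the minimax regret equals 1/4 for every number n of experts. -/

import Mathlib

/-- The truthful experts' posterior reports in a conditionally independent
structure: expert `i` with signal `sv i` reports the posterior
`μ·P1 i (sv i) / (μ·P1 i (sv i) + (1-μ)·P0 i (sv i))`. -/
noncomputable def ciReports {S : Type} {nt : ℕ} (μ : ℝ) (P1 P0 : Fin nt → S → ℝ)
    (sv : Fin nt → S) : Fin nt → ℝ :=
  fun i => μ * P1 i (sv i) / (μ * P1 i (sv i) + (1 - μ) * P0 i (sv i))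

/-- Expected L2 loss of the (possibly non-anonymous) aggregator `f` observing
the `nt` truthful posterior reports followed by the `k` adversarial reports
`σ ω sv` (the adversaries see the state and every truthful signal). -/
noncomputable def ciLoss {S : Type} [Fintype S] {nt k : ℕ} (μ : ℝ)
    (P1 P0 : Fin nt → S → ℝ) (f : (Fin (nt + k) → ℝ) → ℝ)
    (σ : Bool → (Fin nt → S) → Fin k → ℝ) : ℝ :=
  μ * ∑ sv : Fin nt → S, (∏ i, P1 i (sv i)) *
      (f (Fin.append (ciReports μ P1 P0 sv) (σ true sv)) - 1) ^ 2
    + (1 - μ) * ∑ sv : Fin nt → S, (∏ i, P0 i (sv i)) *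
      (f (Fin.append (ciReports μ P1 P0 sv) (σ false sv)) - 0) ^ 2

/-- Expected L2 loss of the omniscient benchmark: the infimum of the expected
loss over all aggregators of the truthful reports, given full knowledge of the
information structure. -/
noncomputable def ciBench {S : Type} [Fintype S] {nt : ℕ} (μ : ℝ)
    (P1 P0 : Fin nt → S → ℝ) : ℝ :=
  sInf {L : ℝ | ∃ g : (Fin nt → ℝ) → ℝ,
    L = μ * ∑ sv : Fin nt → S, (∏ i, P1 i (sv i)) *
          (g (ciReports μ P1 P0 sv) - 1) ^ 2
      + (1 - μ) * ∑ sv : Fin nt → S, (∏ i, P0 i (sv i)) *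
          (g (ciReports μ P1 P0 sv) - 0) ^ 2}

section Aux

lemma ci_sum_prod_one {S : Type} [Fintype S] {nt : ℕ} (P : Fin nt → S → ℝ)
    (h : ∀ i, ∑ s, P i s = 1) : ∑ sv : Fin nt → S, ∏ i, P i (sv i) = 1 := by
  have := Finset.prod_univ_sum (fun _ : Fin nt => (Finset.univ : Finset S)) (fun i s => P i s)
  rw [Fintype.piFinset_univ] at this
  rw [← this]; simp [h]

lemma ci_bench_mem_nonneg {S : Type} [Fintype S] {nt : ℕ} (μ : ℝ)
    (P1 P0 : Fin nt → S → ℝ) (hμ0 : 0 ≤ μ) (hμ1 : μ ≤ 1)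
    (hP1 : ∀ i s, 0 ≤ P1 i s) (hP0 : ∀ i s, 0 ≤ P0 i s) :
    ∀ L ∈ {L : ℝ | ∃ g : (Fin nt → ℝ) → ℝ,
      L = μ * ∑ sv : Fin nt → S, (∏ i, P1 i (sv i)) *
            (g (ciReports μ P1 P0 sv) - 1) ^ 2
        + (1 - μ) * ∑ sv : Fin nt → S, (∏ i, P0 i (sv i)) *
            (g (ciReports μ P1 P0 sv) - 0) ^ 2}, 0 ≤ L := by
  rintro L ⟨g, rfl⟩
  have h1 : 0 ≤ ∑ sv : Fin nt → S, (∏ i, P1 i (sv i)) *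
      (g (ciReports μ P1 P0 sv) - 1) ^ 2 :=
    Finset.sum_nonneg fun sv _ => mul_nonneg (Finset.prod_nonneg fun i _ => hP1 i _) (sq_nonneg _)
  have h0 : 0 ≤ ∑ sv : Fin nt → S, (∏ i, P0 i (sv i)) *
      (g (ciReports μ P1 P0 sv) - 0) ^ 2 :=
    Finset.sum_nonneg fun sv _ => mul_nonneg (Finset.prod_nonneg fun i _ => hP0 i _) (sq_nonneg _)
  have := mul_nonneg hμ0 h1
  have := mul_nonneg (by linarith : (0:ℝ) ≤ 1 - μ) h0
  linarith

lemma ci_bench_nonneg {S : Type} [Fintype S] {nt : ℕ} (μ : ℝ)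
    (P1 P0 : Fin nt → S → ℝ) (hμ0 : 0 ≤ μ) (hμ1 : μ ≤ 1)
    (hP1 : ∀ i s, 0 ≤ P1 i s) (hP0 : ∀ i s, 0 ≤ P0 i s) :
    0 ≤ ciBench μ P1 P0 :=
  Real.sInf_nonneg (ci_bench_mem_nonneg μ P1 P0 hμ0 hμ1 hP1 hP0)

end Aux


/-- In the conditionally independent binary-state setting with L2
loss, posterior reports, and at least one omniscient adversary (`k ≥ 1`), the
minimax regret equals `1/4` for every number of experts: the constant aggregator
`1/2` guarantees regret at most `1/4` against every conditionally independent
information structure and adversarial strategy, and every anonymous aggregator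
suffers regret at least `1/4` against some of them. -/
theorem stmt_17 (nt k : ℕ) (hnt : 1 ≤ nt) (hk : 1 ≤ k) :
    -- the random guess guarantees regret at most 1/4:
    (∀ (S : Type) (_ : Fintype S) (μ : ℝ) (P1 P0 : Fin nt → S → ℝ)
        (σ : Bool → (Fin nt → S) → Fin k → ℝ),
      0 ≤ μ → μ ≤ 1 →
      (∀ i s, 0 ≤ P1 i s) → (∀ i, ∑ s, P1 i s = 1) →
      (∀ i s, 0 ≤ P0 i s) → (∀ i, ∑ s, P0 i s = 1) →
      (∀ ω sv j, σ ω sv j ∈ Set.Icc (0:ℝ) 1) →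
      ciLoss μ P1 P0 (fun _ => (1:ℝ) / 2) σ - ciBench μ P1 P0 ≤ 1 / 4) ∧
    -- and no anonymous aggregator can guarantee less:
    (∀ f : (Fin (nt + k) → ℝ) → ℝ,
      (∀ x : Fin (nt + k) → ℝ, (∀ i, x i ∈ Set.Icc (0:ℝ) 1) →
        f x ∈ Set.Icc (0:ℝ) 1) →
      (∀ (π : Equiv.Perm (Fin (nt + k))) (x : Fin (nt + k) → ℝ),
        f (x ∘ π) = f x) →
      ∃ (S : Type) (_ : Fintype S) (μ : ℝ) (P1 P0 : Fin nt → S → ℝ)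
        (σ : Bool → (Fin nt → S) → Fin k → ℝ),
        0 ≤ μ ∧ μ ≤ 1 ∧
        (∀ i s, 0 ≤ P1 i s) ∧ (∀ i, ∑ s, P1 i s = 1) ∧
        (∀ i s, 0 ≤ P0 i s) ∧ (∀ i, ∑ s, P0 i s = 1) ∧
        (∀ ω sv j, σ ω sv j ∈ Set.Icc (0:ℝ) 1) ∧
        1 / 4 ≤ ciLoss μ P1 P0 f σ - ciBench μ P1 P0) := by
  constructor
  · intro S _ μ P1 P0 σ hμ0 hμ1 hP1n hP1s hP0n hP0s hσ
    have hL : ciLoss μ P1 P0 (fun _ => (1:ℝ) / 2) σ = 1 / 4 := by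
      unfold ciLoss
      have e1 : ∑ sv : Fin nt → S, (∏ i, P1 i (sv i)) * ((1:ℝ)/2 - 1) ^ 2
          = 1/4 := by
        rw [← Finset.sum_mul, ci_sum_prod_one P1 hP1s]; norm_num
      have e0 : ∑ sv : Fin nt → S, (∏ i, P0 i (sv i)) * ((1:ℝ)/2 - 0) ^ 2
          = 1/4 := by
        rw [← Finset.sum_mul, ci_sum_prod_one P0 hP0s]; norm_num
      rw [e1, e0]; ring
    have hB := ci_bench_nonneg μ P1 P0 hμ0 hμ1 hP1n hP0n
    linarith
  · intro f hf hanon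
    refine ⟨Bool, inferInstance, 1/2,
      (fun _ s => if s then 1 else 0),
      (fun i s => if i = (⟨0, hnt⟩ : Fin nt) then (if s then 0 else 1)
        else (if s then 1 else 0)),
      (fun ω _ j => if j = (⟨0, hk⟩ : Fin k) then (if ω then 0 else 1) else 1/2),
      by norm_num, by norm_num,
      ?_, ?_, ?_, ?_, ?_, ?_⟩
    · intro i s; dsimp only; split <;> norm_num
    · intro i; simp
    · intro i s; dsimp only; split <;> split <;> norm_num
    · intro i; dsimp only; split <;> simp
    · intro ω sv j; dsimp only
      split
      · split <;> norm_num
      · norm_num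
    · classical
      set i₀ : Fin nt := ⟨0, hnt⟩ with hi₀
      set j₀ : Fin k := ⟨0, hk⟩ with hj₀
      set P1 : Fin nt → Bool → ℝ := fun _ s => if s then 1 else 0 with hP1
      set P0 : Fin nt → Bool → ℝ :=
        fun i s => if i = i₀ then (if s then 0 else 1) else (if s then 1 else 0) with hP0
      set σ : Bool → (Fin nt → Bool) → Fin k → ℝ :=
        fun ω _ j => if j = j₀ then (if ω then 0 else 1) else 1/2 with hσ
      set sv₁ : Fin nt → Bool := fun _ => true with hsv₁
      set sv₀ : Fin nt → Bool := fun i => if i = i₀ then false else true with hsv₀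
      -- single-point sums
      have sum1 : ∀ F : (Fin nt → Bool) → ℝ,
          ∑ sv : Fin nt → Bool, (∏ i, P1 i (sv i)) * F sv = F sv₁ := by
        intro F
        rw [Fintype.sum_eq_single sv₁]
        · simp [hP1, hsv₁]
        · intro sv hsv
          have : ∃ i, sv i ≠ sv₁ i := Function.ne_iff.mp hsv
          obtain ⟨i, hi⟩ := this
          have : sv i = false := by simpa [hsv₁] using hi
          rw [Finset.prod_eq_zero (Finset.mem_univ i) (by simp [hP1, this]), zero_mul]
      have sum0 : ∀ F : (Fin nt → Bool) → ℝ,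
          ∑ sv : Fin nt → Bool, (∏ i, P0 i (sv i)) * F sv = F sv₀ := by
        intro F
        rw [Fintype.sum_eq_single sv₀]
        · have : ∏ i, P0 i (sv₀ i) = 1 := by
            apply Finset.prod_eq_one
            intro i _
            by_cases h : i = i₀ <;> simp [hP0, hsv₀, h]
          rw [this, one_mul]
        · intro sv hsv
          obtain ⟨i, hi⟩ := Function.ne_iff.mp hsv
          have hz : P0 i (sv i) = 0 := by
            by_cases h : i = i₀
            · subst h
              have hval : sv i₀ = true := by
                cases hb : sv i₀
                · exact absurd (by simp [hsv₀, hb]) hi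
                · rfl
              simp [hP0, hval]
            · have : sv i = false := by
                cases hb : sv i
                · rfl
                · exact absurd (by simp [hsv₀, h, hb]) hi
              simp [hP0, h, this]
          rw [Finset.prod_eq_zero (Finset.mem_univ i) hz, zero_mul]
      -- reports
      have rep1 : ciReports (1/2) P1 P0 sv₁ = fun i => if i = i₀ then 1 else 1/2 := by
        funext i
        by_cases h : i = i₀ <;> simp [ciReports, hP1, hP0, hsv₁, h] <;> norm_num
      have rep0 : ciReports (1/2) P1 P0 sv₀ = fun i => if i = i₀ then 0 else 1/2 := by
        funext i
        by_cases h : i = i₀ <;> simp [ciReports, hP1, hP0, hsv₀, h] <;> norm_num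
      -- the two report-vectors seen by f
      set xT : Fin (nt+k) → ℝ :=
        Fin.append (ciReports (1/2) P1 P0 sv₁) (σ true sv₁) with hxT
      set xF : Fin (nt+k) → ℝ :=
        Fin.append (ciReports (1/2) P1 P0 sv₀) (σ false sv₀) with hxF
      set a : Fin (nt+k) := Fin.castAdd k i₀ with ha
      set b : Fin (nt+k) := Fin.natAdd nt j₀ with hb
      have hswap : xF = xT ∘ (Equiv.swap a b) := by
        funext p
        rcases eq_or_ne p a with rfl | hpa
        · rw [Function.comp_apply, Equiv.swap_apply_left, hxF, hxT, ha, hb,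
            Fin.append_left, Fin.append_right, rep0]
          simp [hσ]
        rcases eq_or_ne p b with rfl | hpb
        · rw [Function.comp_apply, Equiv.swap_apply_right, hxF, hxT, ha, hb,
            Fin.append_right, Fin.append_left, rep1]
          simp [hσ]
        rw [Function.comp_apply, Equiv.swap_apply_of_ne_of_ne hpa hpb]
        by_cases hp : (p : ℕ) < nt
        · have hpe : p = Fin.castAdd k ⟨(p : ℕ), hp⟩ := by ext; rfl
          have hii : (⟨(p : ℕ), hp⟩ : Fin nt) ≠ i₀ := by
            intro h; exact hpa (by rw [hpe, h, ha])
          rw [hpe, hxF, hxT, Fin.append_left, Fin.append_left, rep0, rep1]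
          simp [hii]
        · have hp2 : (p : ℕ) - nt < k := by have := p.isLt; omega
          have hpe : p = Fin.natAdd nt ⟨(p : ℕ) - nt, hp2⟩ := by
            ext; simp; omega
          have hjj : (⟨(p : ℕ) - nt, hp2⟩ : Fin k) ≠ j₀ := by
            intro h; exact hpb (by rw [hpe, h, hb])
          rw [hpe, hxF, hxT, Fin.append_right, Fin.append_right]
          simp [hσ, hjj]
      have hfx : f xF = f xT := by rw [hswap]; exact hanon _ _
      -- the loss
      have hloss : ciLoss (1/2) P1 P0 f σ
          = 1/2 * (f xT - 1)^2 + 1/2 * (f xF - 0)^2 := by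
        unfold ciLoss
        rw [sum1 (fun sv => (f (Fin.append (ciReports (1/2) P1 P0 sv) (σ true sv)) - 1)^2),
          sum0 (fun sv => (f (Fin.append (ciReports (1/2) P1 P0 sv) (σ false sv)) - 0)^2)]
        norm_num
        rfl
      -- the benchmark is at most 0
      have hbench : ciBench (1/2) P1 P0 ≤ 0 := by
        apply csInf_le
        · exact ⟨0, ci_bench_mem_nonneg (1/2) P1 P0 (by norm_num) (by norm_num)
            (by intro i s; simp only [hP1]; split <;> norm_num)
            (by intro i s; simp only [hP0]; split <;> split <;> norm_num)⟩
        · refine ⟨fun r => r i₀, ?_⟩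
          rw [sum1 (fun sv => ((ciReports (1/2) P1 P0 sv) i₀ - 1)^2),
            sum0 (fun sv => ((ciReports (1/2) P1 P0 sv) i₀ - 0)^2), rep1, rep0]
          simp
      have hv := hf xT (by
        intro p
        by_cases hp : (p : ℕ) < nt
        · have hpe : p = Fin.castAdd k ⟨(p : ℕ), hp⟩ := by ext; rfl
          rw [hpe, hxT, Fin.append_left, rep1]
          simp only [Set.mem_Icc]; constructor <;> (split <;> norm_num)
        · have hp2 : (p : ℕ) - nt < k := by have := p.isLt; omega
          have hpe : p = Fin.natAdd nt ⟨(p : ℕ) - nt, hp2⟩ := by ext; simp; omega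
          rw [hpe, hxT, Fin.append_right]
          simp only [hσ, Set.mem_Icc]
          constructor <;> (split <;> norm_num))
      obtain ⟨hv0, hv1⟩ := hv
      rw [hloss, hfx]
      nlinarith [sq_nonneg (f xT - 1/2)]
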